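/- arXiv:2603.11648 — 2 statements merged into one kernel-verified Lean document; each statement's English description precedes it below -/
import Mathlib

section
/- Every VRA A can be transformed into an equivalent codeterministic and complete VRA B, all of whose component automata are complete DFAs, with |B| = 2^{O(|A|)}. In particular, for each pair ⟨c,r⟩, B has one component automaton B^𝒥 for each subset 𝒥 of {J : f(J) = ⟨c,r⟩}, with L(B^𝒥) = ⋂_{J∈𝒥} L(A^J) ∖ ⋃_{J∉𝒥} L(A^J), and these recursive languages partition WM(Σ̂). -/
/-- A symbol of a pushdown alphabet: internal, call, or return. -/
inductive VSym (I C R : Type) : Type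
  | int  : I → VSym I C R
  | call : C → VSym I C R
  | ret  : R → VSym I C R

/-- The set of well-matched words over a pushdown alphabet. -/
inductive WellMatched {I C R : Type} : List (VSym I C R) → Prop
  | internal (u : List I) : WellMatched (u.map VSym.int)
  | bracket {w : List (VSym I C R)} (c : C) (r : R) :
      WellMatched w → WellMatched (VSym.call c :: w ++ [VSym.ret r])
  | concat {w₁ w₂ : List (VSym I C R)} :
      WellMatched w₁ → WellMatched w₂ → WellMatched (w₁ ++ w₂)

def VSym.isCall {I C R : Type} : VSym I C R → Bool
  | .call _ => true
  | _ => false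

def VSym.isRet {I C R : Type} : VSym I C R → Bool
  | .ret _ => true
  | _ => false

/-- The depth of a word: the maximal excess of call symbols over return symbols
in any prefix (the deepest level of unmatched calls at any point). -/
def VSym.depth {I C R : Type} (w : List (VSym I C R)) : ℕ :=
  (w.inits.map fun p => p.countP VSym.isCall - p.countP VSym.isRet).foldr max 0

/-- A visibly recursive automaton: a family of finite automata over the internal
and procedural symbols, identified by the component map `comp` (`none` denotes the
starting automaton `A^S`, `some J` the component automaton `A^J`), together with a
linking function `link` assigning to each procedural symbol a call/return pair.
Transitions of each component automaton stay within that component. -/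
structure VRA (I C R P Q : Type) where
  /-- the linking function `f : Σ_proc → Σ_call × Σ_ret` -/
  link : P → C × R
  /-- the component automaton each state belongs to (`none` = starting automaton) -/
  comp : Q → Option P
  init : Q → Prop
  final : Q → Prop
  intTrans : Q → I → Q → Prop
  procTrans : Q → P → Q → Prop
  intTrans_comp : ∀ ⦃q a p⦄, intTrans q a p → comp p = comp q
  procTrans_comp : ∀ ⦃q J p⦄, procTrans q J p → comp p = comp q

namespace VRA

variable {I C R P Q : Type}

/-- One step of a recursive run, on configurations (state, stack of states). -/
inductive Step (A : VRA I C R P Q) : Q × List Q → VSym I C R → Q × List Q → Prop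
  | int {q q' : Q} {σ : List Q} {a : I} :
      A.intTrans q a q' → Step A (q, σ) (VSym.int a) (q', σ)
  | call {q q' p : Q} {σ : List Q} {J : P} {c : C} :
      A.procTrans q J p → (A.link J).1 = c → A.comp q' = some J → A.init q' →
      Step A (q, σ) (VSym.call c) (q', p :: σ)
  | ret {q p : Q} {σ : List Q} {J : P} {r : R} :
      A.comp q = some J → A.final q → (A.link J).2 = r →
      Step A (q, p :: σ) (VSym.ret r) (p, σ)

/-- Recursive runs of a VRA. -/
inductive Run (A : VRA I C R P Q) : Q × List Q → List (VSym I C R) → Q × List Q → Prop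
  | nil (cfg : Q × List Q) : Run A cfg [] cfg
  | cons {cfg₁ cfg₂ cfg₃ : Q × List Q} {a : VSym I C R} {w : List (VSym I C R)} :
      Step A cfg₁ a cfg₂ → Run A cfg₂ w cfg₃ → Run A cfg₁ (a :: w) cfg₃

/-- The recursive language of the component automaton `A^J` (`J = none` is the
starting automaton): words with a recursive run from an initial state of the
component with empty stack to a final state of the component with empty stack. -/
def RecLang (A : VRA I C R P Q) (J : Option P) : Set (List (VSym I C R)) :=
  {w | ∃ qi qf, A.comp qi = J ∧ A.init qi ∧ A.comp qf = J ∧ A.final qf ∧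
    Run A (qi, []) w (qf, [])}

/-- The language of a VRA: the recursive language of its starting automaton. -/
def Lang (A : VRA I C R P Q) : Set (List (VSym I C R)) := A.RecLang none

/-- Regular runs: runs of the component automata viewed as ordinary finite
automata over the alphabet `Σ_int ∪ Σ_proc`. -/
inductive RegRun (A : VRA I C R P Q) : Q → List (I ⊕ P) → Q → Prop
  | nil (q : Q) : RegRun A q [] q
  | int {q q' p : Q} {a : I} {w : List (I ⊕ P)} :
      A.intTrans q a q' → RegRun A q' w p → RegRun A q (Sum.inl a :: w) p
  | proc {q q' p : Q} {J : P} {w : List (I ⊕ P)} :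
      A.procTrans q J q' → RegRun A q' w p → RegRun A q (Sum.inr J :: w) p

/-- The regular language of the component automaton `A^J`, over `Σ_int ∪ Σ_proc`. -/
def RegLang (A : VRA I C R P Q) (J : Option P) : Set (List (I ⊕ P)) :=
  {w | ∃ qi qf, A.comp qi = J ∧ A.init qi ∧ A.comp qf = J ∧ A.final qf ∧
    RegRun A qi w qf}

/-- A VRA is codeterministic if component automata linked to the same call/return
pair have pairwise disjoint recursive languages. -/
def Codeterministic (A : VRA I C R P Q) : Prop :=
  ∀ J J' : P, J ≠ J' → A.link J = A.link J' →
    A.RecLang (some J) ∩ A.RecLang (some J') = ∅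

/-- A VRA is complete if every state has an outgoing transition on every symbol of
`Σ_int ∪ Σ_proc`, and for every call/return pair the recursive languages of the
linked component automata cover all well-matched words. -/
def Complete (A : VRA I C R P Q) : Prop :=
  (∀ (q : Q) (a : I), ∃ p, A.intTrans q a p) ∧
  (∀ (q : Q) (J : P), ∃ p, A.procTrans q J p) ∧
  (∀ (c : C) (r : R),
    (⋃ J ∈ {J : P | A.link J = (c, r)}, A.RecLang (some J)) = {w | WellMatched w})

/-- A VRA is deterministic if every component automaton (including the starting
one) has a unique initial state and deterministic transitions, and procedural
transitions from a common state on procedural symbols with the same call symbol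
agree on the procedural symbol. -/
def Deterministic (A : VRA I C R P Q) : Prop :=
  (∀ J : Option P, ∃! q, A.comp q = J ∧ A.init q) ∧
  (∀ q a p p', A.intTrans q a p → A.intTrans q a p' → p = p') ∧
  (∀ q J p p', A.procTrans q J p → A.procTrans q J p' → p = p') ∧
  (∀ q J J' p p', A.procTrans q J p → A.procTrans q J' p' →
    (A.link J).1 = (A.link J').1 → J = J')

/-- All component automata of the VRA are complete DFAs: a unique initial state in
each component and exactly one outgoing transition per state and symbol. -/
def AllCompleteDFA (A : VRA I C R P Q) : Prop :=
  (∀ J : Option P, ∃! q, A.comp q = J ∧ A.init q) ∧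
  (∀ (q : Q) (a : I), ∃! p, A.intTrans q a p) ∧
  (∀ (q : Q) (J : P), ∃! p, A.procTrans q J p)

/-- The size of a VRA: number of states plus number of transitions. -/
noncomputable def size (A : VRA I C R P Q) : ℕ :=
  Nat.card Q + Nat.card {t : Q × I × Q // A.intTrans t.1 t.2.1 t.2.2}
    + Nat.card {t : Q × P × Q // A.procTrans t.1 t.2.1 t.2.2}

end VRA

namespace VRA

variable {I C R P Q : Type}

section Aux

variable {A : VRA I C R P Q}

theorem Run.append {c₁ c₂ c₃ : Q × List Q} {w₁ w₂ : List (VSym I C R)}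
    (h₁ : Run A c₁ w₁ c₂) (h₂ : Run A c₂ w₂ c₃) : Run A c₁ (w₁ ++ w₂) c₃ := by
  induction h₁ with
  | nil => exact h₂
  | cons s _ ih => exact Run.cons s (ih h₂)

theorem Run.split {c₁ c₃ : Q × List Q} {w₁ w₂ : List (VSym I C R)}
    (h : Run A c₁ (w₁ ++ w₂) c₃) : ∃ c₂, Run A c₁ w₁ c₂ ∧ Run A c₂ w₂ c₃ := by
  induction w₁ generalizing c₁ with
  | nil => exact ⟨c₁, Run.nil c₁, h⟩
  | cons a w ih =>
    cases h with
    | cons s r =>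
      obtain ⟨c₂, r1, r2⟩ := ih r
      exact ⟨c₂, Run.cons s r1, r2⟩

theorem Step.shift {c c' : Q × List Q} {τ : List Q} {a : VSym I C R}
    (h : Step A c a c') : Step A (c.1, c.2 ++ τ) a (c'.1, c'.2 ++ τ) := by
  cases h with
  | int h => exact Step.int h
  | call h h1 h2 h3 => exact Step.call h h1 h2 h3
  | ret h1 h2 h3 => exact Step.ret h1 h2 h3

theorem Run.shift {c c' : Q × List Q} {τ : List Q} {w : List (VSym I C R)}
    (h : Run A c w c') : Run A (c.1, c.2 ++ τ) w (c'.1, c'.2 ++ τ) := by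
  induction h with
  | nil c => exact Run.nil _
  | cons s _ ih => exact Run.cons (Step.shift s) ih

/-- Matched runs: runs of a component automaton on a well-matched word, where
each matched bracket is processed by entering a linked component automaton. -/
inductive MRun (A : VRA I C R P Q) : Q → List (VSym I C R) → Q → Prop
  | nil (q : Q) : MRun A q [] q
  | int {q q₁ q' : Q} {a : I} {w : List (VSym I C R)} :
      A.intTrans q a q₁ → MRun A q₁ w q' → MRun A q (VSym.int a :: w) q'
  | bracket {q p q' qi qf : Q} {J : P} {c : C} {r : R} {u w : List (VSym I C R)} :
      A.procTrans q J p → A.link J = (c, r) →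
      A.comp qi = some J → A.init qi → A.comp qf = some J → A.final qf →
      MRun A qi u qf → MRun A p w q' →
      MRun A q (VSym.call c :: u ++ VSym.ret r :: w) q'

theorem MRun.comp_eq {q q' : Q} {w : List (VSym I C R)} (h : MRun A q w q') :
    A.comp q' = A.comp q := by
  induction h with
  | nil => rfl
  | int ht _ ih => exact ih.trans (A.intTrans_comp ht)
  | bracket ht _ _ _ _ _ _ _ _ ih2 => exact ih2.trans (A.procTrans_comp ht)

theorem MRun.toRun {q q' : Q} {w : List (VSym I C R)} (h : MRun A q w q') :
    ∀ σ, Run A (q, σ) w (q', σ) := by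
  induction h with
  | nil => intro σ; exact Run.nil _
  | int ht _ ih => intro σ; exact Run.cons (Step.int ht) (ih σ)
  | bracket ht hl hci hii hcf hff _ _ ih1 ih2 =>
    intro σ
    refine Run.cons (Step.call ht (by rw [hl]) hci hii) ?_
    exact Run.append (ih1 _) (Run.cons (Step.ret hcf hff (by rw [hl])) (ih2 σ))

theorem MRun.wellMatched {q q' : Q} {w : List (VSym I C R)} (h : MRun A q w q') :
    WellMatched w := by
  induction h with
  | nil => exact WellMatched.internal []
  | int ht hm ih =>
    rename_i q q₁ q' a w
    exact WellMatched.concat (WellMatched.internal [a]) ih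
  | bracket ht hl hci hii hcf hff hcon hnext ih1 ih2 =>
    rename_i q p q' qi qf J c r u w
    have := WellMatched.concat (WellMatched.bracket c r ih1) ih2
    simpa using this

theorem MRun.append {q q₁ q' : Q} {w₁ w₂ : List (VSym I C R)}
    (h1 : MRun A q w₁ q₁) (h2 : MRun A q₁ w₂ q') : MRun A q (w₁ ++ w₂) q' := by
  induction h1 with
  | nil => exact h2
  | int ht _ ih => exact MRun.int ht (ih h2)
  | bracket ht hl hci hii hcf hff hc _ _ ih2 =>
    have := MRun.bracket ht hl hci hii hcf hff hc (ih2 h2)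
    simpa using this

end Aux

end VRA

section WMCounts

variable {I C R : Type}

theorem WellMatched.count_eq {w : List (VSym I C R)} (h : WellMatched w) :
    w.countP VSym.isCall = w.countP VSym.isRet := by
  induction h with
  | internal u =>
    simp [List.countP_map, Function.comp_def, VSym.isCall, VSym.isRet]
  | bracket c r _ ih =>
    simp [List.countP_cons, List.countP_append, VSym.isCall, VSym.isRet, ih]
  | concat _ _ ih1 ih2 =>
    simp [List.countP_append, ih1, ih2]

theorem prefix_append_cases {α : Type*} {p w₁ w₂ : List α} (h : p <+: w₁ ++ w₂) :
    p <+: w₁ ∨ ∃ s, p = w₁ ++ s ∧ s <+: w₂ := by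
  induction w₁ generalizing p with
  | nil => exact Or.inr ⟨p, rfl, h⟩
  | cons a w ih =>
    cases p with
    | nil => exact Or.inl List.nil_prefix
    | cons x p' =>
      rw [List.cons_append, List.cons_prefix_cons] at h
      obtain ⟨rfl, h⟩ := h
      rcases ih h with h' | ⟨s, rfl, hs⟩
      · exact Or.inl (List.cons_prefix_cons.mpr ⟨rfl, h'⟩)
      · exact Or.inr ⟨s, rfl, hs⟩

theorem WellMatched.prefix_count {w : List (VSym I C R)} (h : WellMatched w) :
    ∀ p, p <+: w → p.countP VSym.isRet ≤ p.countP VSym.isCall := by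
  induction h with
  | internal u =>
    intro p hp
    have h0 : ∀ x ∈ p, ∃ a, x = VSym.int a := by
      intro x hx
      have := hp.subset hx
      simp only [List.mem_map] at this
      obtain ⟨a, _, rfl⟩ := this
      exact ⟨a, rfl⟩
    have h1 : p.countP VSym.isRet = 0 := by
      rw [List.countP_eq_zero]
      intro x hx; obtain ⟨a, rfl⟩ := h0 x hx; simp [VSym.isRet]
    have h2 : p.countP VSym.isCall = 0 := by
      rw [List.countP_eq_zero]
      intro x hx; obtain ⟨a, rfl⟩ := h0 x hx; simp [VSym.isCall]
    omega
  | bracket c r hw ih =>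
    rename_i v
    intro p hp
    rcases prefix_append_cases hp with h' | ⟨s, rfl, hs⟩
    · cases p with
      | nil => simp
      | cons x p' =>
        rw [List.cons_prefix_cons] at h'
        obtain ⟨rfl, h'⟩ := h'
        have := ih p' h'
        simp [List.countP_cons, VSym.isCall, VSym.isRet]
        omega
    · have hwc := ih v (List.prefix_refl v)
      have hs' : s = [] ∨ s = [VSym.ret r] := by
        cases s with
        | nil => exact Or.inl rfl
        | cons y s' =>
          rw [List.cons_prefix_cons] at hs
          obtain ⟨rfl, hs⟩ := hs
          simp at hs
          exact Or.inr (by rw [hs])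
      rcases hs' with rfl | rfl <;>
        simp [List.cons_append, List.countP_cons, List.countP_append,
          List.countP_nil, List.append_nil, VSym.isCall, VSym.isRet] <;> omega
  | concat h1 h2 ih1 ih2 =>
    intro p hp
    rcases prefix_append_cases hp with h' | ⟨s, rfl, hs⟩
    · exact ih1 p h'
    · have := ih2 s hs
      have := h1.count_eq
      simp only [List.countP_append]
      omega

theorem wm_split_unique {u u' w w' : List (VSym I C R)} {r r' : R}
    (hu : WellMatched u) (hu' : WellMatched u')
    (h : u ++ VSym.ret r :: w = u' ++ VSym.ret r' :: w') :
    u = u' ∧ r = r' ∧ w = w' := by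
  have key : ∀ (u u' w w' : List (VSym I C R)) (r r' : R), WellMatched u → WellMatched u' →
      u ++ VSym.ret r :: w = u' ++ VSym.ret r' :: w' → u <+: u' → u = u' := by
    intro u u' w w' r r' hu hu' h hpre
    obtain ⟨t, rfl⟩ := hpre
    cases t with
    | nil => simp
    | cons y t' =>
      rw [List.append_assoc, List.append_right_inj] at h
      cases h
      exfalso
      have hp : u ++ [VSym.ret r] <+: u ++ VSym.ret r :: t' :=
        ⟨t', by simp⟩
      have := hu'.prefix_count _ hp
      have h1 := hu.count_eq
      simp [List.countP_append, List.countP_cons, List.countP_nil,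
        VSym.isCall, VSym.isRet] at this
      omega
  have huu : u = u' := by
    have p1 : u <+: u' ++ VSym.ret r' :: w' := h ▸ ⟨VSym.ret r :: w, rfl⟩
    have p2 : u' <+: u' ++ VSym.ret r' :: w' := ⟨VSym.ret r' :: w', rfl⟩
    rcases List.prefix_or_prefix_of_prefix p1 p2 with hpre | hpre
    · exact key u u' w w' r r' hu hu' h hpre
    · exact (key u' u w' w r' r hu' hu h.symm hpre).symm
  subst huu
  rw [List.append_right_inj] at h
  cases h
  exact ⟨rfl, rfl, rfl⟩

end WMCounts

namespace VRA

variable {I C R P Q : Type}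

section Aux3

variable {A : VRA I C R P Q}

theorem Run.stack_height {c c' : Q × List Q} {w : List (VSym I C R)}
    (h : Run A c w c') :
    c'.2.length + w.countP VSym.isRet = c.2.length + w.countP VSym.isCall := by
  induction h with
  | nil => rfl
  | cons s _ ih =>
    cases s <;>
      simp [List.countP_cons, VSym.isCall, VSym.isRet] at ih ⊢ <;> omega

theorem run_to_empty_decomp :
    ∀ (n : ℕ) (v : List (VSym I C R)), v.length ≤ n → ∀ q p σ qf,
      Run A (q, p :: σ) v (qf, []) →
      ∃ u q₂ J r w', v = u ++ VSym.ret r :: w' ∧ Run A (q, []) u (q₂, []) ∧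
        A.comp q₂ = some J ∧ A.final q₂ ∧ (A.link J).2 = r ∧
        Run A (p, σ) w' (qf, []) := by
  intro n
  induction n with
  | zero =>
    intro v hv q p σ qf hrun
    obtain rfl : v = [] := List.eq_nil_of_length_eq_zero (Nat.le_zero.mp hv)
    cases hrun
  | succ n ih =>
    intro v hv q p σ qf hrun
    cases hrun with
    | cons s hr =>
      cases s with
      | @int _ _ _ a' ht =>
        obtain ⟨u, q₂, J, r, w', rfl, h1, h2, h3, h4, h5⟩ :=
          ih _ (by simp at hv; omega) _ p σ qf hr
        exact ⟨VSym.int a' :: u, q₂, J, r, w', rfl,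
          Run.cons (Step.int ht) h1, h2, h3, h4, h5⟩
      | @call _ q₁ p₁ _ J₀ c ht hc hcomp hinit =>
        obtain ⟨u₁, q₂, J₁, r₁, w₁, rfl, h1, h2, h3, h4, h5⟩ :=
          ih _ (by simp at hv; omega) q₁ p₁ (p :: σ) qf hr
        obtain ⟨u₂, q₃, J₂, r₂, w₂, rfl, g1, g2, g3, g4, g5⟩ :=
          ih w₁ (by simp at hv; omega) p₁ p σ qf h5
        refine ⟨VSym.call c :: u₁ ++ VSym.ret r₁ :: u₂, q₃, J₂, r₂, w₂, by simp, ?_,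
          g2, g3, g4, g5⟩
        refine Run.cons (Step.call ht hc hcomp hinit) ?_
        have hsh : Run A (q₁, [p₁]) u₁ (q₂, [p₁]) := by
          simpa using h1.shift (τ := [p₁])
        exact Run.append hsh (Run.cons (Step.ret h2 h3 h4) g1)
      | @ret _ _ _ J₀ r₀ hcomp hfin hlink =>
        exact ⟨[], q, J₀, r₀, _, rfl, Run.nil _, hcomp, hfin, hlink, hr⟩

theorem runEmpty_mrun :
    ∀ (n : ℕ) (w : List (VSym I C R)), w.length ≤ n → ∀ q q',
      Run A (q, []) w (q', []) → MRun A q w q' := by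
  intro n
  induction n with
  | zero =>
    intro w hw q q' hrun
    obtain rfl : w = [] := List.eq_nil_of_length_eq_zero (Nat.le_zero.mp hw)
    cases hrun
    exact MRun.nil q
  | succ n ih =>
    intro w hw q q' hrun
    cases hrun with
    | nil => exact MRun.nil q
    | cons s hr =>
      cases s with
      | int ht =>
        exact MRun.int ht (ih _ (by simp at hw; omega) _ _ hr)
      | @call _ q₁ p _ J c ht hc hcomp hinit =>
        obtain ⟨u, q₂, J₂, r, w', rfl, h1, h2, h3, h4, h5⟩ :=
          run_to_empty_decomp _ _ le_rfl q₁ p [] q' hr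
        have hmu : MRun A q₁ u q₂ := ih u (by simp at hw ⊢; omega) _ _ h1
        have hmw : MRun A p w' q' := ih w' (by simp at hw ⊢; omega) _ _ h5
        have hcq2 : A.comp q₂ = some J := hmu.comp_eq.trans hcomp
        obtain rfl : J₂ = J := by rw [hcq2] at h2; exact (Option.some.inj h2).symm
        have hlJ : A.link J₂ = (c, r) := by rw [← hc, ← h4]
        exact MRun.bracket ht hlJ hcomp hinit hcq2 h3 hmu hmw

end Aux3

end VRA

namespace VRA

variable {I C R P Q : Type}

section Aux4

variable {A : VRA I C R P Q}

theorem run_empty_iff_mrun {q q' : Q} {w : List (VSym I C R)} :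
    Run A (q, []) w (q', []) ↔ MRun A q w q' :=
  ⟨fun h => runEmpty_mrun w.length w le_rfl q q' h, fun h => h.toRun []⟩

theorem MRun.split {q q' : Q} {w₁ w₂ : List (VSym I C R)} (h1 : WellMatched w₁)
    (h : MRun A q (w₁ ++ w₂) q') : ∃ q₁, MRun A q w₁ q₁ ∧ MRun A q₁ w₂ q' := by
  obtain ⟨⟨q₁, σ₁⟩, r1, r2⟩ := Run.split (h.toRun [])
  have hh := r1.stack_height
  have hc := h1.count_eq
  simp only at hh
  have hσ : σ₁ = [] := by
    refine List.eq_nil_of_length_eq_zero ?_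
    simp at hh
    omega
  subst hσ
  exact ⟨q₁, run_empty_iff_mrun.mp r1, run_empty_iff_mrun.mp r2⟩

theorem mrun_nil_inv {q q' : Q} (h : MRun A q [] q') : q' = q := by
  cases h; rfl

theorem mrun_int_iff {q q' : Q} {a : I} {w : List (VSym I C R)} :
    MRun A q (VSym.int a :: w) q' ↔ ∃ q₁, A.intTrans q a q₁ ∧ MRun A q₁ w q' := by
  constructor
  · intro h
    generalize hv : VSym.int a :: w = v at h
    cases h with
    | nil => simp at hv
    | int ht hm =>
      obtain ⟨h1, h2⟩ := List.cons.inj hv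
      cases h1
      cases h2
      exact ⟨_, ht, hm⟩
    | bracket ht hl hci hii hcf hff hcon hnext =>
      rw [List.cons_append] at hv
      obtain ⟨h1, -⟩ := List.cons.inj hv
      cases h1
  · rintro ⟨q₁, ht, hm⟩
    exact MRun.int ht hm

/-- Acceptance of a word by the component automaton `A^J`, via matched runs. -/
def Acc (A : VRA I C R P Q) (J : P) (u : List (VSym I C R)) : Prop :=
  ∃ qi qf, A.comp qi = some J ∧ A.init qi ∧ A.comp qf = some J ∧ A.final qf ∧
    MRun A qi u qf

theorem mrun_call_inv {q q'' : Q} {c : C} {r : R} {u w' : List (VSym I C R)}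
    (hu : WellMatched u)
    (h : MRun A q (VSym.call c :: u ++ VSym.ret r :: w') q'') :
    ∃ J p, A.procTrans q J p ∧ A.link J = (c, r) ∧ Acc A J u ∧ MRun A p w' q'' := by
  generalize hv : VSym.call c :: u ++ VSym.ret r :: w' = v at h
  cases h with
  | nil => simp at hv
  | int ht hm => rw [List.cons_append] at hv; simp at hv
  | bracket ht hl hci hii hcf hff hcon hnext =>
    rw [List.cons_append, List.cons_append] at hv
    obtain ⟨h1, h2⟩ := List.cons.inj hv
    injection h1 with hc'
    subst hc'
    obtain ⟨rfl, rfl, rfl⟩ := wm_split_unique hu hcon.wellMatched h2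
    exact ⟨_, _, ht, hl, ⟨_, _, hci, hii, hcf, hff, hcon⟩, hnext⟩

/-- The set of states reachable from `S` by a matched run on `w`. -/
def img (A : VRA I C R P Q) (S : Set Q) (w : List (VSym I C R)) : Set Q :=
  {q' | ∃ q ∈ S, MRun A q w q'}

/-- The deterministic int-transition of the subset construction. -/
def dInt (A : VRA I C R P Q) (S : Set Q) (a : I) : Set Q :=
  {p | ∃ q ∈ S, A.intTrans q a p}

/-- Successors through a matched bracket `⟨c, u, r⟩`. -/
def callSucc (A : VRA I C R P Q) (S : Set Q) (c : C) (r : R)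
    (u : List (VSym I C R)) : Set Q :=
  {p | ∃ q ∈ S, ∃ J, A.link J = (c, r) ∧ Acc A J u ∧ A.procTrans q J p}

theorem img_nil (S : Set Q) : img A S [] = S := by
  ext q'
  constructor
  · rintro ⟨q, hq, hm⟩; rw [mrun_nil_inv hm]; exact hq
  · intro h; exact ⟨q', h, MRun.nil q'⟩

theorem img_int (S : Set Q) (a : I) (w : List (VSym I C R)) :
    img A S (VSym.int a :: w) = img A (dInt A S a) w := by
  ext q'
  constructor
  · rintro ⟨q, hq, hm⟩
    obtain ⟨q₁, ht, hm'⟩ := mrun_int_iff.mp hm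
    exact ⟨q₁, ⟨q, hq, ht⟩, hm'⟩
  · rintro ⟨q₁, ⟨q, hq, ht⟩, hm⟩
    exact ⟨q, hq, MRun.int ht hm⟩

theorem img_call {u : List (VSym I C R)} (hu : WellMatched u) (S : Set Q)
    (c : C) (r : R) (w' : List (VSym I C R)) :
    img A S (VSym.call c :: u ++ VSym.ret r :: w') =
      img A (callSucc A S c r u) w' := by
  ext q''
  constructor
  · rintro ⟨q, hq, hm⟩
    obtain ⟨J, p, ht, hl, hacc, hm'⟩ := mrun_call_inv hu hm
    exact ⟨p, ⟨q, hq, J, hl, hacc, ht⟩, hm'⟩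
  · rintro ⟨p, ⟨q, hq, J, hl, hacc, ht⟩, hm⟩
    obtain ⟨qi, qf, hci, hii, hcf, hff, hcon⟩ := hacc
    exact ⟨q, hq, MRun.bracket ht hl hci hii hcf hff hcon hm⟩

theorem img_append {w₁ w₂ : List (VSym I C R)} (h1 : WellMatched w₁) (S : Set Q) :
    img A S (w₁ ++ w₂) = img A (img A S w₁) w₂ := by
  ext q''
  constructor
  · rintro ⟨q, hq, hm⟩
    obtain ⟨q₁, hm1, hm2⟩ := hm.split h1
    exact ⟨q₁, ⟨q, hq, hm1⟩, hm2⟩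
  · rintro ⟨q₁, ⟨q, hq, hm1⟩, hm2⟩
    exact ⟨q, hq, hm1.append hm2⟩

/-- The initial state set of the subset construction. -/
def S0 (A : VRA I C R P Q) : Set Q := {q | A.init q}

theorem recLang_iff {J : Option P} {w : List (VSym I C R)} :
    w ∈ A.RecLang J ↔ ∃ qi qf, A.comp qi = J ∧ A.init qi ∧ A.comp qf = J ∧
      A.final qf ∧ MRun A qi w qf := by
  unfold RecLang
  simp only [Set.mem_setOf_eq, run_empty_iff_mrun]

theorem recLang_wm {J : Option P} {w : List (VSym I C R)} (h : w ∈ A.RecLang J) :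
    WellMatched w := by
  obtain ⟨qi, qf, -, -, -, -, hm⟩ := recLang_iff.mp h
  exact hm.wellMatched

theorem acc_iff_recLang {J : P} {u : List (VSym I C R)} :
    Acc A J u ↔ u ∈ A.RecLang (some J) := by
  rw [recLang_iff]; rfl

theorem acc_iff_img {J : P} {u : List (VSym I C R)} :
    Acc A J u ↔ ∃ q' ∈ img A (S0 A) u, A.comp q' = some J ∧ A.final q' := by
  constructor
  · rintro ⟨qi, qf, hci, hii, hcf, hff, hm⟩
    exact ⟨qf, ⟨qi, hii, hm⟩, hcf, hff⟩
  · rintro ⟨q', ⟨qi, hii, hm⟩, hc, hf⟩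
    exact ⟨qi, q', hm.comp_eq ▸ hc, hii, hc, hf, hm⟩

end Aux4

end VRA

namespace VRA

variable {I C R P Q : Type}

/-- The deterministic proc-transition of the subset construction. -/
def dProc (A : VRA I C R P Q) (S : Set Q) (K : (C × R) × Set P) : Set Q :=
  {p | ∃ q ∈ S, ∃ J ∈ K.2, A.link J = K.1 ∧ A.procTrans q J p}

/-- The codeterministic subset construction. -/
def Det (A : VRA I C R P Q) :
    VRA I C R ((C × R) × Set P) (Option ((C × R) × Set P) × Set Q) where
  link K := K.1
  comp x := x.1
  init x := x.2 = S0 A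
  final x :=
    (x.1 = none → ∃ q ∈ x.2, A.comp q = none ∧ A.final q) ∧
    (∀ K, x.1 = some K →
      K.2 ⊆ {J | A.link J = K.1} ∧
      ∀ J, A.link J = K.1 → (J ∈ K.2 ↔ ∃ q ∈ x.2, A.comp q = some J ∧ A.final q))
  intTrans x a y := y = (x.1, dInt A x.2 a)
  procTrans x K y := y = (x.1, dProc A x.2 K)
  intTrans_comp := by rintro q a p rfl; rfl
  procTrans_comp := by rintro q J p rfl; rfl

section Det

variable {A : VRA I C R P Q}

theorem det_final {x : Option ((C × R) × Set P) × Set Q} :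
    (Det A).final x ↔
      ((x.1 = none → ∃ q ∈ x.2, A.comp q = none ∧ A.final q) ∧
       (∀ K, x.1 = some K →
        K.2 ⊆ {J | A.link J = K.1} ∧
        ∀ J, A.link J = K.1 →
          (J ∈ K.2 ↔ ∃ q ∈ x.2, A.comp q = some J ∧ A.final q))) := Iff.rfl

theorem det_dProc_eq {S : Set Q} {K : (C × R) × Set P} {c : C} {r : R}
    {u : List (VSym I C R)} (hK : K.1 = (c, r))
    (hsub : K.2 ⊆ {J | A.link J = K.1})
    (hiff : ∀ J, A.link J = K.1 →
      (J ∈ K.2 ↔ ∃ q' ∈ img A (S0 A) u, A.comp q' = some J ∧ A.final q')) :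
    dProc A S K = callSucc A S c r u := by
  ext p
  constructor
  · rintro ⟨q, hq, J, hJ, hl, ht⟩
    refine ⟨q, hq, J, hK ▸ hl, ?_, ht⟩
    exact acc_iff_img.mpr ((hiff J hl).mp hJ)
  · rintro ⟨q, hq, J, hl, hacc, ht⟩
    have hl' : A.link J = K.1 := hK ▸ hl
    exact ⟨q, hq, J, (hiff J hl').mpr (acc_iff_img.mp hacc), hl', ht⟩

theorem det_mrun_eq : ∀ {x y : Option ((C × R) × Set P) × Set Q}
    {w : List (VSym I C R)}, MRun (Det A) x w y → y = (x.1, img A x.2 w) := by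
  intro x y w h
  induction h with
  | nil => rw [img_nil]
  | int ht hm ih =>
    rename_i x q₁ y a w
    have ht' : q₁ = (x.1, dInt A x.2 a) := ht
    rw [ih, ht', img_int]
  | bracket ht hl hci hii hcf hff hcon hnext ih1 ih2 =>
    rename_i x p y qi qf K c r u w
    have hu : WellMatched u := hcon.wellMatched
    have hKcr : K.1 = (c, r) := hl
    have hqf : qf = (some K, img A (S0 A) u) := by
      rw [ih1, show qi.1 = some K from hci, show qi.2 = S0 A from hii]
    rw [hqf] at hff
    obtain ⟨hsub, hiff⟩ := (det_final.mp hff).2 K rfl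
    have hD : dProc A x.2 K = callSucc A x.2 c r u := det_dProc_eq hKcr hsub hiff
    have hp : p = (x.1, dProc A x.2 K) := ht
    rw [ih2, hp, img_call hu, hD]

theorem det_mrun_exists_internal (K : Option ((C × R) × Set P)) :
    ∀ (u : List I) (S : Set Q),
      MRun (Det A) (K, S) (u.map VSym.int) (K, img A S (u.map VSym.int)) := by
  intro u
  induction u with
  | nil => intro S; rw [List.map_nil, img_nil]; exact MRun.nil _
  | cons a u ih =>
    intro S
    rw [List.map_cons, img_int]
    exact MRun.int rfl (ih (dInt A S a))

theorem det_mrun_exists {w : List (VSym I C R)} (hw : WellMatched w) :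
    ∀ (K : Option ((C × R) × Set P)) (S : Set Q),
      MRun (Det A) (K, S) w (K, img A S w) := by
  induction hw with
  | internal u => exact fun K S => det_mrun_exists_internal K u S
  | bracket c r hv ih =>
    rename_i v
    intro K S
    have hfin : (Det A).final
        (some ((c, r), {J | A.link J = (c, r) ∧ Acc A J v}), img A (S0 A) v) := by
      rw [det_final]
      constructor
      · intro h; cases h
      · rintro K₀ hK₀
        injection hK₀ with hK₀
        subst hK₀
        constructor
        · rintro J ⟨hJ, -⟩; exact hJ
        · intro J hJ
          constructor
          · rintro ⟨-, hacc⟩; exact acc_iff_img.mp hacc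
          · intro h; exact ⟨hJ, acc_iff_img.mpr h⟩
    obtain ⟨hsub, hiff⟩ := (det_final.mp hfin).2 _ rfl
    have hD : dProc A S ((c, r), {J | A.link J = (c, r) ∧ Acc A J v})
        = callSucc A S c r v := det_dProc_eq rfl hsub hiff
    have hbr := MRun.bracket (A := Det A) (q := (K, S))
      (p := (K, dProc A S ((c, r), {J | A.link J = (c, r) ∧ Acc A J v})))
      (q' := (K, dProc A S ((c, r), {J | A.link J = (c, r) ∧ Acc A J v})))
      (qi := (some ((c, r), {J | A.link J = (c, r) ∧ Acc A J v}), S0 A))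
      (qf := (some ((c, r), {J | A.link J = (c, r) ∧ Acc A J v}), img A (S0 A) v))
      (J := ((c, r), {J | A.link J = (c, r) ∧ Acc A J v})) (c := c) (r := r)
      (u := v) (w := []) rfl rfl rfl rfl rfl hfin (ih _ (S0 A)) (MRun.nil _)
    have himg : img A S (VSym.call c :: v ++ ([VSym.ret r] : List (VSym I C R)))
        = dProc A S ((c, r), {J | A.link J = (c, r) ∧ Acc A J v}) := by
      rw [img_call hv, img_nil, hD]
    rw [himg]
    exact hbr
  | concat h1 h2 ih1 ih2 =>
    rename_i w₁ w₂
    intro K S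
    rw [img_append h1]
    exact (ih1 K S).append (ih2 K (img A S w₁))

theorem det_recLang {K : Option ((C × R) × Set P)} {w : List (VSym I C R)} :
    w ∈ (Det A).RecLang K ↔
      WellMatched w ∧ (Det A).final (K, img A (S0 A) w) := by
  constructor
  · intro h
    obtain ⟨qi, qf, hc, hi, hc', hf, hm⟩ := recLang_iff.mp h
    obtain ⟨K₁, S₁⟩ := qi
    obtain rfl : K₁ = K := hc
    obtain rfl : S₁ = S0 A := hi
    have := det_mrun_eq hm
    rw [this] at hf
    exact ⟨hm.wellMatched, hf⟩
  · rintro ⟨hwm, hfin⟩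
    exact recLang_iff.mpr ⟨(K, S0 A), (K, img A (S0 A) w), rfl, rfl, rfl, hfin,
      det_mrun_exists hwm K (S0 A)⟩

end Det

end VRA

namespace VRA

variable {I C R P Q : Type}

/-- The int-transitions of the subset construction, as a type. -/
def detIntEquiv (A : VRA I C R P Q) :
    {t : (Option ((C × R) × Set P) × Set Q) × I × (Option ((C × R) × Set P) × Set Q) //
      (Det A).intTrans t.1 t.2.1 t.2.2} ≃ (Option ((C × R) × Set P) × Set Q) × I where
  toFun t := (t.1.1, t.1.2.1)
  invFun x := ⟨(x.1, x.2, (x.1.1, dInt A x.1.2 x.2)), rfl⟩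
  left_inv := by
    rintro ⟨⟨q, a, y⟩, hy⟩
    obtain rfl : y = (q.1, dInt A q.2 a) := hy
    rfl
  right_inv x := rfl

/-- The proc-transitions of the subset construction, as a type. -/
def detProcEquiv (A : VRA I C R P Q) :
    {t : (Option ((C × R) × Set P) × Set Q) × ((C × R) × Set P) ×
        (Option ((C × R) × Set P) × Set Q) //
      (Det A).procTrans t.1 t.2.1 t.2.2} ≃
      (Option ((C × R) × Set P) × Set Q) × ((C × R) × Set P) where
  toFun t := (t.1.1, t.1.2.1)
  invFun x := ⟨(x.1, x.2, (x.1.1, dProc A x.1.2 x.2)), rfl⟩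
  left_inv := by
    rintro ⟨⟨q, K, y⟩, hy⟩
    obtain rfl : y = (q.1, dProc A q.2 K) := hy
    rfl
  right_inv x := rfl

instance finiteOption (α : Type) [Finite α] : Finite (Option α) :=
  Finite.of_equiv _ (Equiv.optionEquivSumPUnit.{0, 0} α).symm

theorem card_set_eq (α : Type) [Finite α] : Nat.card (Set α) = 2 ^ Nat.card α := by
  have h : Nat.card (Set α) = Nat.card (α → Bool) :=
    Nat.card_congr (Equiv.arrowCongr (Equiv.refl α) Equiv.propEquivBool)
  rw [h, Nat.card_fun, Nat.card_eq_fintype_card (α := Bool)]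
  rfl

theorem card_option_eq (α : Type) [Finite α] :
    Nat.card (Option α) = Nat.card α + 1 := by
  rw [Nat.card_congr (Equiv.optionEquivSumPUnit.{0, 0} α), Nat.card_sum]
  simp

theorem bound_arith (cI cC cR p q n : ℕ) (hpq : p ≤ q) (hqn : q ≤ n) :
    (cC * cR * 2 ^ p + 1) * 2 ^ q * (1 + cI + cC * cR * 2 ^ p)
      ≤ ((1 + cC * cR) * (1 + cI + cC * cR) + 3) *
        2 ^ (((1 + cC * cR) * (1 + cI + cC * cR) + 3) * n) := by
  have hp : p ≤ n := hpq.trans hqn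
  have h1 : (2 : ℕ) ^ p ≤ 2 ^ n := Nat.pow_le_pow_right (by norm_num) hp
  have h2 : (2 : ℕ) ^ q ≤ 2 ^ n := Nat.pow_le_pow_right (by norm_num) hqn
  have hone : 1 ≤ (2 : ℕ) ^ n := Nat.one_le_two_pow
  have h3 : cC * cR * 2 ^ p ≤ cC * cR * 2 ^ n := Nat.mul_le_mul_left _ h1
  have h4 : cI ≤ cI * 2 ^ n := Nat.le_mul_of_pos_right _ (by positivity)
  calc (cC * cR * 2 ^ p + 1) * 2 ^ q * (1 + cI + cC * cR * 2 ^ p)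
      ≤ ((cC * cR + 1) * 2 ^ n) * 2 ^ n * ((1 + cI + cC * cR) * 2 ^ n) := by
        refine Nat.mul_le_mul (Nat.mul_le_mul ?_ h2) ?_ <;> nlinarith [h3, h4, hone]
    _ = ((cC * cR + 1) * (1 + cI + cC * cR)) * 2 ^ (n + n + n) := by
        rw [pow_add, pow_add]; ring
    _ ≤ ((1 + cC * cR) * (1 + cI + cC * cR) + 3) *
        2 ^ (((1 + cC * cR) * (1 + cI + cC * cR) + 3) * n) := by
        refine Nat.mul_le_mul (by nlinarith) (Nat.pow_le_pow_right (by norm_num) ?_)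
        have h5 : n + n + n = 3 * n := by ring
        rw [h5]
        exact Nat.mul_le_mul_right n (Nat.le_add_left 3 _)

theorem det_size (A : VRA I C R P Q) [Finite I] [Finite C] [Finite R]
    [Finite P] [Finite Q] :
    (Det A).size = (Nat.card C * Nat.card R * 2 ^ Nat.card P + 1) * 2 ^ Nat.card Q
      * (1 + Nat.card I + Nat.card C * Nat.card R * 2 ^ Nat.card P) := by
  unfold VRA.size
  rw [Nat.card_congr (detIntEquiv A), Nat.card_congr (detProcEquiv A)]
  simp only [Nat.card_prod, card_option_eq, card_set_eq]
  ring

end VRA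

/-- every (finite) VRA `A` is equivalent to a codeterministic,
complete VRA `B` of size `2^{O(|A|)}`, all of whose component automata are
complete DFAs; `B` has, for each pair `⟨c,r⟩`, one component for each subset `𝒥`
of `{J : f(J) = ⟨c,r⟩}`, whose recursive language is
`⋂_{J∈𝒥} L(A^J) ∖ ⋃_{J∉𝒥} L(A^J)` (the empty intersection being `WM(Σ̂)`);
these languages partition `WM(Σ̂)`. -/
theorem VRA.exists_codet_complete_equiv (I C R : Type) [Finite I] [Finite C] [Finite R] :
    ∃ k : ℕ, ∀ (P Q : Type) [Finite P] [Finite Q] (A : VRA I C R P Q),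
      (∀ J : P, ∃ q, A.comp q = some J) →
      ∃ (Q' : Type) (_ : Finite Q') (B : VRA I C R ((C × R) × Set P) Q'),
        B.Lang = A.Lang ∧
        B.Codeterministic ∧
        B.Complete ∧
        B.AllCompleteDFA ∧
        (∀ p : (C × R) × Set P, B.link p = p.1) ∧
        (∀ (c : C) (r : R) (𝒥 : Set P), 𝒥 ⊆ {J : P | A.link J = (c, r)} →
          B.RecLang (some ((c, r), 𝒥)) =
            ({w | WellMatched w} ∩ ⋂ J ∈ 𝒥, A.RecLang (some J)) \
              ⋃ J ∈ {J : P | A.link J = (c, r)} \ 𝒥, A.RecLang (some J)) ∧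
        B.size ≤ k * 2 ^ (k * A.size) := by
  classical
  refine ⟨(1 + Nat.card C * Nat.card R) * (1 + Nat.card I + Nat.card C * Nat.card R) + 3, ?_⟩
  intro P Q hFP hFQ A hsurj
  haveI := hFP
  haveI := hFQ
  refine ⟨Option ((C × R) × Set P) × Set Q, inferInstance, Det A,
    ?_, ?_, ?_, ?_, fun p => rfl, ?_, ?_⟩
  · -- language equivalence
    ext w
    constructor
    · intro h
      obtain ⟨hwm, hfin⟩ := det_recLang.mp h
      obtain ⟨q', ⟨qi, hii, hm⟩, hcn, hfn⟩ := (det_final.mp hfin).1 rfl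
      exact recLang_iff.mpr ⟨qi, q', hm.comp_eq ▸ hcn, hii, hcn, hfn, hm⟩
    · intro h
      obtain ⟨qi, qf, hci, hii, hcf, hff, hm⟩ := recLang_iff.mp h
      refine det_recLang.mpr ⟨hm.wellMatched, ?_⟩
      rw [det_final]
      exact ⟨fun _ => ⟨qf, ⟨qi, hii, hm⟩, hcf, hff⟩, fun K hK => (Option.some_ne_none _ hK.symm).elim⟩
  · -- codeterministic
    intro K K' hne hlink
    have hlink' : K.1 = K'.1 := hlink
    ext w
    simp only [Set.mem_inter_iff, Set.mem_empty_iff_false, iff_false, not_and]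
    intro h1 h2
    obtain ⟨hwm, hf1⟩ := det_recLang.mp h1
    obtain ⟨-, hf2⟩ := det_recLang.mp h2
    obtain ⟨hsub1, hiff1⟩ := (det_final.mp hf1).2 K rfl
    obtain ⟨hsub2, hiff2⟩ := (det_final.mp hf2).2 K' rfl
    apply hne
    have h2eq : K.2 = K'.2 := by
      ext J
      constructor
      · intro hJ
        have hl : A.link J = K.1 := hsub1 hJ
        exact (hiff2 J (hlink' ▸ hl)).mpr ((hiff1 J hl).mp hJ)
      · intro hJ
        have hl : A.link J = K'.1 := hsub2 hJ
        exact (hiff1 J (hlink'.symm ▸ hl)).mpr ((hiff2 J hl).mp hJ)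
    exact Prod.ext hlink' h2eq
  · -- complete
    refine ⟨fun q a => ⟨(q.1, dInt A q.2 a), rfl⟩,
      fun q K => ⟨(q.1, dProc A q.2 K), rfl⟩, ?_⟩
    intro c r
    ext w
    simp only [Set.mem_iUnion, Set.mem_setOf_eq]
    constructor
    · rintro ⟨K, hK, hw⟩
      exact (det_recLang.mp hw).1
    · intro hw
      refine ⟨((c, r), {J | A.link J = (c, r) ∧ Acc A J w}), rfl, ?_⟩
      refine det_recLang.mpr ⟨hw, ?_⟩
      rw [det_final]
      refine ⟨fun h => (Option.some_ne_none _ h).elim, ?_⟩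
      rintro K₀ hK₀
      injection hK₀ with hK₀
      subst hK₀
      exact ⟨fun J hJ => hJ.1,
        fun J hJ => ⟨fun h => acc_iff_img.mp h.2, fun h => ⟨hJ, acc_iff_img.mpr h⟩⟩⟩
  · -- all complete DFAs
    refine ⟨?_, fun q a => ⟨(q.1, dInt A q.2 a), rfl, fun y hy => hy⟩,
      fun q K => ⟨(q.1, dProc A q.2 K), rfl, fun y hy => hy⟩⟩
    intro K
    refine ⟨(K, S0 A), ⟨rfl, rfl⟩, ?_⟩
    rintro ⟨K₁, S₁⟩ ⟨hc, hi⟩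
    obtain rfl : K₁ = K := hc
    obtain rfl : S₁ = S0 A := hi
    rfl
  · -- recursive languages of the components
    intro c r 𝒥 h𝒥
    ext w
    constructor
    · intro h
      obtain ⟨hwm, hfin⟩ := det_recLang.mp h
      obtain ⟨hsub', hiff⟩ := (det_final.mp hfin).2 ((c, r), 𝒥) rfl
      simp only [Set.mem_diff, Set.mem_inter_iff, Set.mem_setOf_eq, Set.mem_iInter,
        Set.mem_iUnion, not_exists]
      refine ⟨⟨hwm, fun J hJ => ?_⟩, ?_⟩
      · exact acc_iff_recLang.mp (acc_iff_img.mpr ((hiff J (h𝒥 hJ)).mp hJ))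
      · rintro J ⟨hl, hJn⟩ hw
        exact hJn ((hiff J hl).mpr (acc_iff_img.mp (acc_iff_recLang.mpr hw)))
    · intro h
      simp only [Set.mem_diff, Set.mem_inter_iff, Set.mem_setOf_eq, Set.mem_iInter,
        Set.mem_iUnion, not_exists] at h
      obtain ⟨⟨hwm, hints⟩, hnot⟩ := h
      refine det_recLang.mpr ⟨hwm, ?_⟩
      rw [det_final]
      refine ⟨fun h => (Option.some_ne_none _ h).elim, ?_⟩
      rintro K₀ hK₀
      injection hK₀ with hK₀
      subst hK₀
      refine ⟨h𝒥, ?_⟩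
      intro J hl
      constructor
      · intro hJ
        exact acc_iff_img.mp (acc_iff_recLang.mpr (hints J hJ))
      · intro h
        by_contra hJn
        exact hnot J ⟨hl, hJn⟩ (acc_iff_recLang.mp (acc_iff_img.mpr h))
  · -- size bound
    have hPQ : Nat.card P ≤ Nat.card Q := by
      choose g hg using hsurj
      refine Nat.card_le_card_of_injective g ?_
      intro J J' h
      have h1 := hg J
      rw [h, hg J'] at h1
      exact (Option.some.inj h1).symm
    have hQn : Nat.card Q ≤ A.size := by
      unfold VRA.size
      omega
    rw [det_size]
    exact bound_arith _ _ _ _ _ _ hPQ hQn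
end

section
/- For a VRA A, define Reach_0 as the set of all initial states of all component automata, 𝒥_i = {J ∈ Σ_proc : F^J ∩ Reach_i ≠ ∅}, and Reach_{i+1} = Reach_i ∪ {p : ∃ q ∈ Reach_i, ∃ a ∈ Σ_int ∪ 𝒥_i with transition q →^a p}. Let Reach_* be the fixpoint of this iteration. Then for every J ∈ Σ_proc ∪ {S}: L(A^J) ≠ ∅ if and only if F^J ∩ Reach_* ≠ ∅. In particular, L(A) = ∅ iff F^S ∩ Reach_* = ∅. -/
namespace VRA

variable {I C R P Q : Type}

/-- The reachability iteration for the emptiness check: `ReachSeq 0` is the set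
of all initial states; at each step, we may follow internal transitions and
procedural transitions on symbols `J` whose component already has a reached final
state. -/
def ReachSeq (A : VRA I C R P Q) : ℕ → Set Q
  | 0 => {q | A.init q}
  | n + 1 => A.ReachSeq n ∪
      {p | ∃ q ∈ A.ReachSeq n,
        (∃ a : I, A.intTrans q a p) ∨
        ∃ J : P, (∃ qf, A.comp qf = some J ∧ A.final qf ∧ qf ∈ A.ReachSeq n) ∧
          A.procTrans q J p}

/-- The fixpoint of the (monotone) reachability iteration. -/
def ReachStar (A : VRA I C R P Q) : Set Q := ⋃ n, A.ReachSeq n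

lemma ReachSeq.mono (A : VRA I C R P Q) {m n : ℕ} (h : m ≤ n) :
    A.ReachSeq m ⊆ A.ReachSeq n := by
  induction n with
  | zero => simp_all
  | succ n ih =>
    rcases Nat.le_succ_iff.mp h with h' | h'
    · exact (ih h').trans (by intro x hx; exact Or.inl hx)
    · subst h'; rfl

lemma mem_reachStar (A : VRA I C R P Q) {q : Q} :
    q ∈ A.ReachStar ↔ ∃ n, q ∈ A.ReachSeq n := Set.mem_iUnion

lemma Run.append_s16 {A : VRA I C R P Q} {c1 c2 c3 : Q × List Q}
    {w w' : List (VSym I C R)} (h1 : Run A c1 w c2) (h2 : Run A c2 w' c3) :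
    Run A c1 (w ++ w') c3 := by
  induction h1 with
  | nil => exact h2
  | cons s _ ih => exact .cons s (ih h2)

lemma Run.lift {A : VRA I C R P Q} {q p : Q} {σ σ' τ : List Q}
    {w : List (VSym I C R)} (h : Run A (q, σ) w (p, σ')) :
    Run A (q, σ ++ τ) w (p, σ' ++ τ) := by
  generalize hc1 : (q, σ) = c1 at h
  generalize hc2 : (p, σ') = c2 at h
  induction h generalizing q σ p σ' with
  | nil c =>
    obtain ⟨rfl, rfl⟩ := Prod.mk.inj (hc1.trans hc2.symm)
    exact .nil _
  | cons s _ ih =>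
    subst hc1 hc2
    cases s with
    | int h => exact .cons (.int h) (ih rfl rfl)
    | call h1 h2 h3 h4 => exact .cons (.call h1 h2 h3 h4) (ih rfl rfl)
    | ret h1 h2 h3 => exact .cons (.ret h1 h2 h3) (ih rfl rfl)

/-- Invariant on stacks: each element was pushed from a reached state via a
procedural transition on the symbol naming the current component. -/
def StackInv (A : VRA I C R P Q) : Option P → List Q → Prop
  | _, [] => True
  | J, d :: δ => ∃ qd ∈ A.ReachStar, ∃ J', J = some J' ∧
      A.procTrans qd J' d ∧ StackInv A (A.comp d) δ

lemma run_reach {A : VRA I C R P Q} {c1 c2 : Q × List Q}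
    {w : List (VSym I C R)} (h : Run A c1 w c2)
    (hq : c1.1 ∈ A.ReachStar) (hσ : A.StackInv (A.comp c1.1) c1.2) :
    c2.1 ∈ A.ReachStar ∧ A.StackInv (A.comp c2.1) c2.2 := by
  induction h with
  | nil => exact ⟨hq, hσ⟩
  | cons s _ ih =>
    cases s with
    | @int q q' σ a ht =>
      refine ih ?_ ?_
      · obtain ⟨n, hn⟩ := (A.mem_reachStar).mp hq
        exact (A.mem_reachStar).mpr ⟨n + 1, Or.inr ⟨q, hn, Or.inl ⟨a, ht⟩⟩⟩
      · rwa [A.intTrans_comp ht]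
    | @call q q' p' σ J c ht hl hcomp hinit =>
      refine ih ((A.mem_reachStar).mpr ⟨0, hinit⟩) ?_
      rw [hcomp]
      exact ⟨q, hq, J, rfl, ht, by rwa [A.procTrans_comp ht]⟩
    | @ret q d σ J r hcomp hfin hl =>
      obtain ⟨qd, hqd, J', hJ', ht, hinv⟩ := hσ
      obtain ⟨m, hm⟩ := (A.mem_reachStar).mp hqd
      obtain ⟨n, hn⟩ := (A.mem_reachStar).mp hq
      have hd : d ∈ A.ReachSeq (max m n + 1) :=
        Or.inr ⟨qd, ReachSeq.mono A (le_max_left m n) hm,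
          Or.inr ⟨J', ⟨q, hJ', hfin, ReachSeq.mono A (le_max_right m n) hn⟩, ht⟩⟩
      exact ih ((A.mem_reachStar).mpr ⟨_, hd⟩) hinv

lemma reachSeq_run {A : VRA I C R P Q} (n : ℕ) :
    ∀ p ∈ A.ReachSeq n, ∃ qi w, A.init qi ∧ A.comp qi = A.comp p ∧
      Run A (qi, []) w (p, []) := by
  induction n with
  | zero => exact fun p hp => ⟨p, [], hp, rfl, .nil _⟩
  | succ n ih =>
    rintro p (hp | ⟨q, hq, ⟨a, ht⟩ | ⟨J, ⟨qf', hcf, hff, hrf⟩, ht⟩⟩)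
    · exact ih p hp
    · obtain ⟨qi, w, h1, h2, h3⟩ := ih q hq
      exact ⟨qi, w ++ [VSym.int a], h1, by rw [h2, A.intTrans_comp ht],
        h3.append_s16 (.cons (.int ht) (.nil _))⟩
    · obtain ⟨qi, w, h1, h2, h3⟩ := ih q hq
      obtain ⟨qi', w', h1', h2', h3'⟩ := ih qf' hrf
      rw [hcf] at h2'
      refine ⟨qi, w ++ VSym.call (A.link J).1 :: (w' ++ [VSym.ret (A.link J).2]),
        h1, by rw [h2, A.procTrans_comp ht], h3.append_s16 (.cons (.call ht rfl h2' h1') ?_)⟩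
      have := h3'.lift (τ := [p])
      exact this.append_s16 (.cons (.ret hcf hff rfl) (.nil _))

end VRA

/-- for every component `J ∈ Σ_proc ∪ {S}` of a finite VRA, the
recursive language `L(A^J)` is nonempty iff some final state of `A^J` is in the
reachability fixpoint; in particular `L(A) = ∅` iff no final state of the
starting automaton is reached. -/
theorem VRA.emptiness_via_reach {I C R P Q : Type} [Finite Q]
    (A : VRA I C R P Q) :
    (∀ J : Option P, (A.RecLang J).Nonempty ↔
      ∃ q, A.comp q = J ∧ A.final q ∧ q ∈ A.ReachStar) ∧
    (A.Lang = ∅ ↔ ¬ ∃ q, A.comp q = none ∧ A.final q ∧ q ∈ A.ReachStar) := by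
  have main : ∀ J : Option P, (A.RecLang J).Nonempty ↔
      ∃ q, A.comp q = J ∧ A.final q ∧ q ∈ A.ReachStar := by
    intro J
    constructor
    · rintro ⟨w, qi, qf, hci, hii, hcf, hff, hr⟩
      exact ⟨qf, hcf, hff, (run_reach hr ((A.mem_reachStar).mpr ⟨0, hii⟩) trivial).1⟩
    · rintro ⟨q, hc, hf, hs⟩
      obtain ⟨n, hn⟩ := (A.mem_reachStar).mp hs
      obtain ⟨qi, w, h1, h2, h3⟩ := reachSeq_run n q hn
      exact ⟨w, qi, q, h2.trans hc, h1, hc, hf, h3⟩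
  refine ⟨main, ?_⟩
  rw [← Set.not_nonempty_iff_eq_empty]
  exact not_congr (main none)
end
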